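/- The function ℓ(c) = c²/(1+c²) − ∫₀^∞ c² t e^{−ct − t²/2} dt satisfies lim_{c→0⁺} ℓ(c) = 0 and lim_{c→∞} ℓ(c) = 0, and ℓ(c) > 0 for all c ∈ (0,∞). -/

import Mathlib

open Set MeasureTheory Filter Real

noncomputable def Ef (c t : ℝ) : ℝ := Real.exp (-c*t - t^2/2)

lemma Ef_pos (c t : ℝ) : 0 < Ef c t := Real.exp_pos _

lemma Ef_le_gauss {c t : ℝ} (hc : 0 ≤ c) (ht : 0 ≤ t) :
    Ef c t ≤ Real.exp (-(1/2) * t^2) := by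
  apply Real.exp_le_exp.2
  nlinarith [mul_nonneg hc ht]

lemma Ef_cont (c : ℝ) : Continuous (Ef c) := by
  apply Real.continuous_exp.comp
  continuity

lemma Ef_int {c : ℝ} (hc : 0 ≤ c) : IntegrableOn (Ef c) (Ioi (0:ℝ)) := by
  apply Integrable.mono' ((integrable_exp_neg_mul_sq (by norm_num : (0:ℝ) < 1/2)).integrableOn)
  · exact (Ef_cont c).aestronglyMeasurable.restrict
  · filter_upwards [ae_restrict_mem measurableSet_Ioi] with t ht
    rw [Real.norm_eq_abs, abs_of_pos (Ef_pos c t)]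
    exact Ef_le_gauss hc ht.le

lemma cEf_int {c : ℝ} (hc : 0 ≤ c) :
    IntegrableOn (fun t => (c+t) * Ef c t) (Ioi (0:ℝ)) := by
  have hmaj : Integrable (fun t : ℝ => c * Real.exp (-(1/2) * t^2)
      + t * Real.exp (-(1/2) * t^2)) := by
    exact ((integrable_exp_neg_mul_sq (by norm_num : (0:ℝ) < 1/2)).const_mul c).add
      (integrable_mul_exp_neg_mul_sq (by norm_num : (0:ℝ) < 1/2))
  apply Integrable.mono' hmaj.integrableOn
  · exact (continuous_const.add continuous_id |>.mul (Ef_cont c)).aestronglyMeasurable.restrict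
  · filter_upwards [ae_restrict_mem measurableSet_Ioi] with t ht
    have h1 : 0 ≤ c + t := add_nonneg hc (le_of_lt ht)
    rw [Real.norm_eq_abs, abs_of_nonneg (mul_nonneg h1 (Ef_pos c t).le)]
    have := Ef_le_gauss hc (le_of_lt ht)
    nlinarith [Ef_pos c t, Real.exp_pos (-(1/2) * t^2)]

lemma Ef_tendsto {c : ℝ} (hc : 0 < c) : Tendsto (Ef c) atTop (nhds 0) := by
  apply Real.tendsto_exp_atBot.comp
  apply tendsto_atBot_mono (fun t => ?_) (tendsto_id.const_mul_atTop_of_neg (neg_neg_iff_pos.2 hc) : Tendsto (fun t : ℝ => -c * t) atTop atBot)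
  nlinarith [sq_nonneg t]

lemma Ef_hasDeriv (c t : ℝ) : HasDerivAt (Ef c) ((-c - t) * Ef c t) t := by
  show HasDerivAt (fun t => Real.exp (-c*t - t^2/2)) _ t
  have h1 : HasDerivAt (fun t : ℝ => -c*t - t^2/2) (-c - t) t := by
    have := ((hasDerivAt_id t).const_mul (-c)).sub ((hasDerivAt_pow 2 t).div_const 2)
    exact this.congr_deriv (by ring)
  simpa [Ef, mul_comm] using h1.exp

noncomputable def Kf (c : ℝ) : ℝ := ∫ t in Ioi (0:ℝ), Ef c t / (1+(c+t)^2)^2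

lemma denom_pos (u : ℝ) : (0:ℝ) < (1+u^2)^2 := by positivity

lemma Kint_int {c : ℝ} (hc : 0 ≤ c) :
    IntegrableOn (fun t => Ef c t / (1+(c+t)^2)^2) (Ioi (0:ℝ)) := by
  apply Integrable.mono' (Ef_int hc)
  · apply Continuous.aestronglyMeasurable (by
      apply (Ef_cont c).div (by continuity)
      intro t; exact (denom_pos (c+t)).ne')  |>.restrict
  · filter_upwards with t
    rw [Real.norm_eq_abs, abs_of_nonneg (div_nonneg (Ef_pos c t).le (denom_pos (c+t)).le)]
    rw [div_le_iff₀ (denom_pos (c+t))]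
    have h1 : 1 ≤ (1+(c+t)^2)^2 := by nlinarith [sq_nonneg (c+t)]
    nlinarith [Ef_pos c t]

lemma F'_int {c : ℝ} (hc : 0 ≤ c) :
    IntegrableOn (fun t => (2/(1+(c+t)^2)^2 - 1) * Ef c t) (Ioi (0:ℝ)) := by
  have : (fun t => (2/(1+(c+t)^2)^2 - 1) * Ef c t)
      = fun t => 2 * (Ef c t / (1+(c+t)^2)^2) - Ef c t := by
    funext t; field_simp
  rw [this]
  exact ((Kint_int hc).const_mul 2).sub (Ef_int hc)

lemma F_hasDeriv (c : ℝ) {t : ℝ} :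
    HasDerivAt (fun t => (c+t)/(1+(c+t)^2) * Ef c t)
      ((2/(1+(c+t)^2)^2 - 1) * Ef c t) t := by
  have hu : HasDerivAt (fun t : ℝ => c + t) 1 t := (hasDerivAt_id t).const_add c
  have hg : HasDerivAt (fun u : ℝ => u/(1+u^2)) ((1-(c+t)^2)/(1+(c+t)^2)^2) (c+t) := by
    have h2 : HasDerivAt (fun u : ℝ => 1+u^2) (2*(c+t)) (c+t) := by
      simpa using ((hasDerivAt_pow 2 (c+t)).const_add 1)
    have := (hasDerivAt_id (c+t)).div h2 (by positivity)
    refine this.congr_deriv ?_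
    simp only [id]; ring
  have hcomp := (hg.comp t hu).mul (Ef_hasDeriv c t)
  refine hcomp.congr_deriv ?_
  have hd : (1+(c+t)^2) ≠ 0 := by positivity
  simp only [Function.comp]
  field_simp
  ring

lemma ftc1 {c : ℝ} (hc : 0 < c) :
    ∫ t in Ioi (0:ℝ), (c+t) * Ef c t = 1 := by
  have h := integral_Ioi_of_hasDerivAt_of_tendsto (f := fun t => -Ef c t)
    (f' := fun t => (c+t) * Ef c t) (a := 0) (m := 0)
    (((Ef_cont c).neg).continuousWithinAt)
    (fun x _ => by exact (Ef_hasDeriv c x).neg.congr_deriv (by ring))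
    (cEf_int hc.le)
    (by simpa using (Ef_tendsto hc).neg)
  simpa [Ef] using h

lemma ftc2 {c : ℝ} (hc : 0 < c) :
    ∫ t in Ioi (0:ℝ), (2/(1+(c+t)^2)^2 - 1) * Ef c t = -(c/(1+c^2)) := by
  have htend : Tendsto (fun t => (c+t)/(1+(c+t)^2) * Ef c t) atTop (nhds 0) := by
    apply squeeze_zero_norm (fun t => ?_) (Ef_tendsto hc)
    rw [norm_mul, Real.norm_eq_abs, Real.norm_eq_abs, abs_of_pos (Ef_pos c t)]
    have h1 : |(c+t)/(1+(c+t)^2)| ≤ 1 := by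
      rw [abs_div, abs_of_pos (by positivity : (0:ℝ) < 1+(c+t)^2), div_le_one (by positivity)]
      cases abs_cases (c+t) with
      | inl h => nlinarith [h.1, sq_nonneg (c+t-1)]
      | inr h => nlinarith [h.1, sq_nonneg (c+t+1)]
    nlinarith [Ef_pos c t, abs_nonneg ((c+t)/(1+(c+t)^2))]
  have hcont : ContinuousWithinAt (fun t => (c+t)/(1+(c+t)^2) * Ef c t) (Ici (0:ℝ)) 0 := by
    apply Continuous.continuousWithinAt
    apply Continuous.mul ?_ (Ef_cont c)
    apply Continuous.div (by continuity) (by continuity)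
    intro t; positivity
  have h := integral_Ioi_of_hasDerivAt_of_tendsto hcont
    (fun x _ => F_hasDeriv c) (F'_int hc.le) htend
  rw [h]
  simp [Ef]

lemma J_eq {c : ℝ} (hc : 0 < c) :
    ∫ t in Ioi (0:ℝ), Ef c t = c/(1+c^2) + 2 * Kf c := by
  have hsplit : (fun t => (2/(1+(c+t)^2)^2 - 1) * Ef c t)
      = fun t => 2 * (Ef c t / (1+(c+t)^2)^2) - Ef c t := by
    funext t; field_simp
  have h2 := ftc2 hc
  rw [hsplit, integral_sub ((Kint_int hc.le).const_mul 2) (Ef_int hc.le),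
    integral_const_mul] at h2
  have : (2:ℝ) * Kf c - ∫ t in Ioi (0:ℝ), Ef c t = -(c/(1+c^2)) := h2
  linarith

lemma key {c : ℝ} (hc : 0 < c) :
    c ^ 2 / (1 + c ^ 2) -
      (∫ t in Ioi (0 : ℝ), c ^ 2 * t * Real.exp (-c * t - t ^ 2 / 2))
      = 2 * c^3 * Kf c := by
  have hI : ∫ t in Ioi (0:ℝ), c ^ 2 * t * Real.exp (-c * t - t ^ 2 / 2)
      = c^2 * ((∫ t in Ioi (0:ℝ), (c+t) * Ef c t) - c * ∫ t in Ioi (0:ℝ), Ef c t) := by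
    rw [← integral_const_mul, ← integral_sub (cEf_int hc.le) ((Ef_int hc.le).const_mul c),
      ← integral_const_mul]
    apply setIntegral_congr_fun measurableSet_Ioi
    intro t _
    simp only [Ef]
    ring
  rw [hI, ftc1 hc, J_eq hc]
  have h1 : (1:ℝ) + c^2 ≠ 0 := by positivity
  field_simp
  ring

lemma Kf_pos {c : ℝ} (hc : 0 < c) : 0 < Kf c := by
  rw [Kf]
  rw [integral_pos_iff_support_of_nonneg_ae]
  · have : Function.support (fun t => Ef c t / (1+(c+t)^2)^2) = Set.univ := by
      ext t
      simp only [Function.mem_support, Set.mem_univ, iff_true]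
      exact ne_of_gt (div_pos (Ef_pos c t) (denom_pos (c+t)))
    rw [this]
    simp [Measure.restrict_apply_univ]
  · filter_upwards with t
    exact div_nonneg (Ef_pos c t).le (denom_pos (c+t)).le
  · exact Kint_int hc.le

noncomputable def Cg : ℝ := ∫ t in Ioi (0:ℝ), Real.exp (-(1/2) * t^2)

lemma Cg_int : IntegrableOn (fun t : ℝ => Real.exp (-(1/2) * t^2)) (Ioi (0:ℝ)) :=
  (integrable_exp_neg_mul_sq (by norm_num : (0:ℝ) < 1/2)).integrableOn

lemma Kf_le_Cg {c : ℝ} (hc : 0 < c) : Kf c ≤ Cg := by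
  apply setIntegral_mono_on (Kint_int hc.le) Cg_int measurableSet_Ioi
  intro t ht
  have h1 : 1 ≤ (1+(c+t)^2)^2 := by nlinarith [sq_nonneg (c+t)]
  calc Ef c t / (1+(c+t)^2)^2 ≤ Ef c t / 1 := by
        apply div_le_div_of_nonneg_left (Ef_pos c t).le one_pos h1
    _ = Ef c t := div_one _
    _ ≤ _ := Ef_le_gauss hc.le ht.le

lemma Kf_le_div {c : ℝ} (hc : 0 < c) : Kf c ≤ Cg / c^4 := by
  rw [Kf, Cg, ← integral_div]
  apply setIntegral_mono_on (Kint_int hc.le) (Cg_int.div_const _) measurableSet_Ioi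
  intro t ht
  have h0 : 0 < t := ht
  have h2 : c^4 ≤ (1+(c+t)^2)^2 := by nlinarith [sq_nonneg (c+t), sq_nonneg c, sq_nonneg t, mul_pos hc h0]
  apply div_le_div₀ (Real.exp_pos _).le (Ef_le_gauss hc.le h0.le) (by positivity) h2

lemma Cg_nonneg : 0 ≤ Cg :=
  setIntegral_nonneg measurableSet_Ioi (fun t _ => (Real.exp_pos _).le)

theorem stmt_16 (ℓ : ℝ → ℝ)
    (hℓ : ∀ c, ℓ c = c ^ 2 / (1 + c ^ 2) -
      ∫ t in Set.Ioi (0 : ℝ), c ^ 2 * t * Real.exp (-c * t - t ^ 2 / 2)) :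
    Filter.Tendsto ℓ (nhdsWithin 0 (Set.Ioi 0)) (nhds 0) ∧
    Filter.Tendsto ℓ Filter.atTop (nhds 0) ∧
    ∀ c > (0 : ℝ), 0 < ℓ c := by
  have hpos : ∀ c > (0:ℝ), 0 < ℓ c := by
    intro c hc
    rw [hℓ c, key hc]
    exact mul_pos (by positivity) (Kf_pos hc)
  refine ⟨?_, ?_, hpos⟩
  · refine squeeze_zero' (g := fun c => 2 * Cg * c^3) ?_ ?_ ?_
    · filter_upwards [self_mem_nhdsWithin] with c hc
      exact (hpos c hc).le
    · filter_upwards [self_mem_nhdsWithin] with c hc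
      rw [hℓ c, key hc]
      have h1 := Kf_le_Cg hc
      nlinarith [pow_pos (show (0:ℝ) < c from hc) 3]
    · have hco : Continuous fun c : ℝ => 2 * Cg * c^3 := by continuity
      have := (hco.tendsto 0).mono_left (nhdsWithin_le_nhds (s := Set.Ioi 0))
      simpa using this
  · refine squeeze_zero' (g := fun c => 2 * Cg / c) ?_ ?_ ?_
    · filter_upwards [eventually_gt_atTop (0:ℝ)] with c hc
      exact (hpos c hc).le
    · filter_upwards [eventually_gt_atTop (0:ℝ)] with c hc
      rw [hℓ c, key hc]
      calc 2 * c^3 * Kf c ≤ 2 * c^3 * (Cg / c^4) :=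
            mul_le_mul_of_nonneg_left (Kf_le_div hc) (by positivity)
        _ = 2 * Cg / c := by field_simp
    · have : Tendsto (fun c : ℝ => 2 * Cg * c⁻¹) atTop (nhds 0) := by
        simpa using tendsto_inv_atTop_zero.const_mul (2 * Cg)
      apply this.congr
      intro c
      rw [div_eq_mul_inv]
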